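/- arXiv:2008.02636 — 2 statements merged into one kernel-verified Lean document; each statement's English description precedes it below -/
import Mathlib

section
/- Let (Ω, F, P) be a probability space. For each n ∈ ℕ let p_n, m ∈ ℕ, let β₀ₙ ∈ ℝ^{p_n}, let f_n : ℝ^{p_n} → ℝ^m, let D_n be a real m × p_n matrix, and let β̂_n : Ω → ℝ^{p_n} be a measurable random vector. Assume: (C1, uniform version) for every ε > 0 there exists δ > 0 such that for all n and all h ∈ ℝ^{p_n} with 0 < ‖h‖₂ ≤ δ one has ‖f_n(β₀ₙ + h) − f_n(β₀ₙ) − D_n h‖₂ ≤ ε‖h‖₂; (C2) r_n is a sequence of positive reals with r_n → ∞ and the sequence of random variables r_n‖β̂_n − β₀ₙ‖₂ is bounded in probability. If d_n is a sequence of positive reals with d_n → ∞ and there is a universal constant C > 0 with ‖|D_n|‖₂ ≤ C/d_n for all n, where ‖|·|‖₂ denotes the Frobenius norm, then r_n‖f_n(β̂_n) − f_n(β₀ₙ)‖₂ converges to 0 in probability, i.e. ‖f_n(β̂_n) − f_n(β₀ₙ)‖₂ = o_p(1/r_n). -/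
open MeasureTheory ProbabilityTheory Filter

/-- Euclidean (ℓ₂) norm of a vector in ℝ^p. -/
noncomputable def l2 {p : ℕ} (v : Fin p → ℝ) : ℝ := Real.sqrt (∑ j, (v j) ^ 2)

/-- Frobenius norm of an m × p real matrix. -/
noncomputable def frob {m p : ℕ} (A : Matrix (Fin m) (Fin p) ℝ) : ℝ :=
  Real.sqrt (∑ i, ∑ j, (A i j) ^ 2)

lemma l2_nonneg {p : ℕ} (v : Fin p → ℝ) : 0 ≤ l2 v := Real.sqrt_nonneg _

lemma frob_nonneg {m p : ℕ} (A : Matrix (Fin m) (Fin p) ℝ) : 0 ≤ frob A :=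
  Real.sqrt_nonneg _

lemma l2_eq {p : ℕ} (v : Fin p → ℝ) :
    l2 v = ‖(WithLp.equiv 2 (Fin p → ℝ)).symm v‖ := by
  rw [EuclideanSpace.norm_eq]
  simp [l2, Real.norm_eq_abs, sq_abs]

lemma l2_add_le {p : ℕ} (a b : Fin p → ℝ) : l2 (a + b) ≤ l2 a + l2 b := by
  rw [l2_eq, l2_eq, l2_eq]
  exact norm_add_le _ _

lemma l2_eq_zero_iff {p : ℕ} (v : Fin p → ℝ) : l2 v = 0 ↔ v = 0 := by
  rw [l2_eq, norm_eq_zero]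
  exact (WithLp.equiv 2 (Fin p → ℝ)).symm.apply_eq_iff_eq_symm_apply.trans (by simp)

lemma l2_mulVec_le {m p : ℕ} (A : Matrix (Fin m) (Fin p) ℝ) (h : Fin p → ℝ) :
    l2 (A.mulVec h) ≤ frob A * l2 h := by
  have key : ∑ i, (A.mulVec h i) ^ 2 ≤ (∑ i, ∑ j, (A i j) ^ 2) * (∑ j, (h j) ^ 2) := by
    rw [Finset.sum_mul]
    refine Finset.sum_le_sum fun i _ => ?_
    exact Finset.sum_mul_sq_le_sq_mul_sq Finset.univ (A i) h
  have h1 : l2 (A.mulVec h) ≤ Real.sqrt ((∑ i, ∑ j, (A i j) ^ 2) * (∑ j, (h j) ^ 2)) :=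
    Real.sqrt_le_sqrt key
  rwa [Real.sqrt_mul (x := ∑ i, ∑ j, (A i j) ^ 2) (Finset.sum_nonneg fun i _ => Finset.sum_nonneg fun j _ => sq_nonneg _)]
    at h1

/-- Theorem 1(c): if the Frobenius norm of the derivative matrices satisfies
`‖|D_n|‖₂ ≤ C/d_n` with `d_n → ∞`, then `‖f_n(β̂_n) - f_n(β₀ₙ)‖₂ = o_p(1/r_n)`. -/
theorem stmt_2 {Ω : Type*} [MeasureSpace Ω] [IsProbabilityMeasure (ℙ : Measure Ω)]
    (p : ℕ → ℕ) (m : ℕ)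
    (β₀ : ∀ n, Fin (p n) → ℝ)
    (f : ∀ n, (Fin (p n) → ℝ) → (Fin m → ℝ))
    (D : ∀ n, Matrix (Fin m) (Fin (p n)) ℝ)
    (βhat : ∀ n, Ω → (Fin (p n) → ℝ))
    (hmeas : ∀ n, Measurable (βhat n))
    (hC1 : ∀ ε > (0 : ℝ), ∃ δ > (0 : ℝ), ∀ n, ∀ h : Fin (p n) → ℝ,
      0 < l2 h → l2 h ≤ δ →
      l2 (f n (β₀ n + h) - f n (β₀ n) - (D n).mulVec h) ≤ ε * l2 h)
    (r : ℕ → ℝ) (hrpos : ∀ n, 0 < r n) (hrtop : Tendsto r atTop atTop)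
    (hC2 : ∀ ε > (0 : ℝ), ∃ M > (0 : ℝ), ∀ n,
      ℙ {ω | M < r n * l2 (βhat n ω - β₀ n)} < ENNReal.ofReal ε)
    (d : ℕ → ℝ) (hdpos : ∀ n, 0 < d n) (hdtop : Tendsto d atTop atTop)
    (C : ℝ) (hC : 0 < C)
    (hD : ∀ n, frob (D n) ≤ C / d n) :
    ∀ δ > (0 : ℝ),
      Tendsto (fun n => ℙ {ω | δ < r n * l2 (f n (βhat n ω) - f n (β₀ n))})
        atTop (nhds 0) := by
  intro δ hδ
  rw [ENNReal.tendsto_nhds_zero]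
  intro ε hε
  -- convert ε : ℝ≥0∞ to a positive real t with ofReal t ≤ ε
  set t : ℝ := if ε = ⊤ then 1 else ε.toReal with ht
  have htpos : 0 < t := by
    by_cases hεt : ε = ⊤
    · simp [ht, hεt]
    · simp only [ht, hεt, if_false]
      exact ENNReal.toReal_pos hε.ne' hεt
  have hoft : ENNReal.ofReal t ≤ ε := by
    by_cases hεt : ε = ⊤
    · simp [hεt]
    · simp only [ht, hεt, if_false]
      rw [ENNReal.ofReal_toReal hεt]
  obtain ⟨M, hM, hP⟩ := hC2 t htpos
  obtain ⟨δ₁, hδ₁, hC1'⟩ := hC1 (δ / (2 * M)) (by positivity)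
  have h1 : ∀ᶠ n in atTop, M / δ₁ ≤ r n := hrtop.eventually_ge_atTop _
  have h2 : ∀ᶠ n in atTop, 2 * M * C / δ ≤ d n := hdtop.eventually_ge_atTop _
  filter_upwards [h1, h2] with n hn1 hn2
  have hsub : {ω | δ < r n * l2 (f n (βhat n ω) - f n (β₀ n))}
      ⊆ {ω | M < r n * l2 (βhat n ω - β₀ n)} := by
    intro ω hω
    simp only [Set.mem_setOf_eq] at hω ⊢
    by_contra hle
    push_neg at hle
    set h : Fin (p n) → ℝ := βhat n ω - β₀ n with hh
    have hβ : βhat n ω = β₀ n + h := by rw [hh]; abel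
    rcases eq_or_lt_of_le (l2_nonneg h) with hz | hzpos
    · -- h = 0
      have : h = 0 := (l2_eq_zero_iff h).mp hz.symm
      have hfe : βhat n ω = β₀ n := by rw [hβ, this, add_zero]
      rw [hfe] at hω
      simp only [sub_self] at hω
      rw [(l2_eq_zero_iff _).mpr rfl, mul_zero] at hω
      exact absurd hω (not_lt.mpr hδ.le)
    · -- h ≠ 0
      have hl2M : l2 h ≤ M / r n := by
        rw [le_div_iff₀ (hrpos n)]
        linarith [hle]
      have hMrn : M / r n ≤ δ₁ := by
        rw [div_le_iff₀ (hrpos n)]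
        have := (div_le_iff₀ hδ₁).mp hn1
        linarith
      have hδ₁' : l2 h ≤ δ₁ := hl2M.trans hMrn
      have hA := hC1' n h hzpos hδ₁'
      have hB : l2 ((D n).mulVec h) ≤ (δ / (2 * M)) * l2 h := by
        have hfrob : frob (D n) ≤ δ / (2 * M) := by
          refine (hD n).trans ?_
          have hd2 : (0:ℝ) < 2 * M * C / δ := by positivity
          have : C / d n ≤ C / (2 * M * C / δ) :=
            div_le_div_of_nonneg_left hC.le hd2 hn2
          refine this.trans_eq ?_
          field_simp
        exact (l2_mulVec_le (D n) h).trans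
          (mul_le_mul_of_nonneg_right hfrob (l2_nonneg h))
      have hdecomp : f n (βhat n ω) - f n (β₀ n)
          = (f n (β₀ n + h) - f n (β₀ n) - (D n).mulVec h) + (D n).mulVec h := by
        rw [hβ]; abel
      have htot : l2 (f n (βhat n ω) - f n (β₀ n)) ≤ (δ / M) * l2 h := by
        rw [hdecomp]
        calc l2 _ ≤ l2 (f n (β₀ n + h) - f n (β₀ n) - (D n).mulVec h)
              + l2 ((D n).mulVec h) := l2_add_le _ _
          _ ≤ (δ / (2 * M)) * l2 h + (δ / (2 * M)) * l2 h := add_le_add hA hB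
          _ = (δ / M) * l2 h := by field_simp; ring
      have : r n * l2 (f n (βhat n ω) - f n (β₀ n)) ≤ δ := by
        calc r n * l2 (f n (βhat n ω) - f n (β₀ n))
            ≤ r n * ((δ / M) * l2 h) :=
              mul_le_mul_of_nonneg_left htot (hrpos n).le
          _ = (δ / M) * (r n * l2 h) := by ring
          _ ≤ (δ / M) * M := by
              exact mul_le_mul_of_nonneg_left hle (by positivity)
          _ = δ := by field_simp
      exact absurd hω (not_lt.mpr this)
  calc ℙ {ω | δ < r n * l2 (f n (βhat n ω) - f n (β₀ n))}
      ≤ ℙ {ω | M < r n * l2 (βhat n ω - β₀ n)} := measure_mono hsub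
    _ ≤ ENNReal.ofReal t := (hP n).le
    _ ≤ ε := hoft
end

section
/- Let (Ω, F, P) be a probability space, p, m ∈ ℕ, β₀ ∈ ℝ^p, and let f : ℝ^p → ℝ^m be Fréchet differentiable at β₀ with derivative given by the m × p real matrix f_d(β₀) (i.e. lim_{h→0} ‖f(β₀ + h) − f(β₀) − f_d(β₀)h‖₂/‖h‖₂ = 0). Let β̂_n : Ω → ℝ^p be measurable random vectors and r_n positive reals with r_n → ∞ such that r_n‖β̂_n − β₀‖₂ is bounded in probability. Then ‖r_n(f(β̂_n) − f(β₀)) − r_n f_d(β₀)(β̂_n − β₀)‖₂ converges to 0 in probability. -/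
open MeasureTheory ProbabilityTheory Filter

lemma l2_smul {p : ℕ} (c : ℝ) (v : Fin p → ℝ) : l2 (c • v) = |c| * l2 v := by
  unfold l2
  have h : ∑ j, ((c • v) j) ^ 2 = c ^ 2 * ∑ j, (v j) ^ 2 := by
    rw [Finset.mul_sum]
    exact Finset.sum_congr rfl (fun j _ => by simp [mul_pow])
  rw [h, Real.sqrt_mul (sq_nonneg c), Real.sqrt_sq_eq_abs]

lemma l2_eq_zero {p : ℕ} {v : Fin p → ℝ} (h : l2 v = 0) : v = 0 := by
  unfold l2 at h
  have hs : ∑ j, (v j) ^ 2 = 0 := by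
    have := Real.sqrt_eq_zero (Finset.sum_nonneg fun j _ => sq_nonneg (v j)) |>.1 h
    exact this
  funext j
  have := (Finset.sum_eq_zero_iff_of_nonneg (fun j _ => sq_nonneg (v j))).1 hs j
    (Finset.mem_univ j)
  exact pow_eq_zero_iff two_ne_zero |>.1 this

/-- If `f` is Fréchet differentiable at `β₀` with derivative matrix `D`, and
`r_n ‖β̂_n - β₀‖₂ = O_p(1)`, then
`‖r_n (f(β̂_n) - f(β₀)) - r_n D (β̂_n - β₀)‖₂ →p 0`. -/
theorem stmt_6 {Ω : Type*} [MeasureSpace Ω] [IsProbabilityMeasure (ℙ : Measure Ω)]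
    (p m : ℕ) (β₀ : Fin p → ℝ) (f : (Fin p → ℝ) → (Fin m → ℝ))
    (D : Matrix (Fin m) (Fin p) ℝ)
    (hdiff : ∀ ε > (0 : ℝ), ∃ δ > (0 : ℝ), ∀ h : Fin p → ℝ,
      0 < l2 h → l2 h ≤ δ →
      l2 (f (β₀ + h) - f β₀ - D.mulVec h) ≤ ε * l2 h)
    (βhat : ℕ → Ω → (Fin p → ℝ)) (hmeas : ∀ n, Measurable (βhat n))
    (r : ℕ → ℝ) (hrpos : ∀ n, 0 < r n) (hrtop : Tendsto r atTop atTop)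
    (hOp : ∀ ε > (0 : ℝ), ∃ M > (0 : ℝ), ∀ n,
      ℙ {ω | M < r n * l2 (βhat n ω - β₀)} < ENNReal.ofReal ε) :
    ∀ δ > (0 : ℝ),
      Tendsto (fun n =>
          ℙ {ω | δ < l2 (r n • (f (βhat n ω) - f β₀) -
            r n • D.mulVec (βhat n ω - β₀))})
        atTop (nhds 0) := by
  intro δ hδ
  rw [ENNReal.tendsto_atTop_zero]
  intro ε hε
  -- convert ε to a positive real
  set εr : ℝ := (min ε 1).toReal with hεr_def
  have hmin_ne : min ε 1 ≠ ⊤ := ne_top_of_le_ne_top (by norm_num) (min_le_right _ _)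
  have hεr_pos : 0 < εr :=
    ENNReal.toReal_pos (lt_min hε (by norm_num)).ne' hmin_ne
  have hofReal : ENNReal.ofReal εr ≤ ε := by
    rw [hεr_def, ENNReal.ofReal_toReal hmin_ne]; exact min_le_left _ _
  obtain ⟨M, hM, hMp⟩ := hOp εr hεr_pos
  set ε' : ℝ := δ / (2 * M) with hε'_def
  have hε'_pos : 0 < ε' := div_pos hδ (by positivity)
  obtain ⟨δ', hδ', hd⟩ := hdiff ε' hε'_pos
  obtain ⟨N, hN⟩ := (hrtop.eventually_ge_atTop (M / δ')).exists_forall_of_atTop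
  refine ⟨N, fun n hn => ?_⟩
  have hrn := hrpos n
  have hrn_ge : M / δ' ≤ r n := hN n hn
  -- set inclusion
  have hsub : {ω | δ < l2 (r n • (f (βhat n ω) - f β₀) -
      r n • D.mulVec (βhat n ω - β₀))} ⊆
      {ω | M < r n * l2 (βhat n ω - β₀)} := by
    intro ω hω
    simp only [Set.mem_setOf_eq] at hω ⊢
    by_contra hcon
    push_neg at hcon
    set h := βhat n ω - β₀ with hh_def
    have hβ : β₀ + h = βhat n ω := by rw [hh_def]; abel
    have hlh : l2 h ≤ M / r n := (le_div_iff₀ hrn).2 (by linarith [hcon] <;> nlinarith)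
    have hlh' : l2 h ≤ δ' := by
      refine hlh.trans ?_
      rw [div_le_iff₀ hrn]
      calc M = (M / δ') * δ' := by field_simp
        _ ≤ r n * δ' := by nlinarith
        _ = δ' * r n := mul_comm _ _
    have hexpr : r n • (f (βhat n ω) - f β₀) - r n • D.mulVec h =
        r n • (f (βhat n ω) - f β₀ - D.mulVec h) := (smul_sub _ _ _).symm
    rw [hexpr, l2_smul, abs_of_pos hrn] at hω
    rcases eq_or_lt_of_le (l2_nonneg h) with h0 | hpos
    · have : h = 0 := l2_eq_zero h0.symm
      rw [← hβ, this] at hω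
      simp only [add_zero, sub_self, Matrix.mulVec_zero, sub_zero] at hω
      unfold l2 at hω
      simp at hω
      linarith
    · have hb := hd h hpos hlh'
      rw [hβ] at hb
      have : r n * l2 (f (βhat n ω) - f β₀ - D.mulVec h) ≤ r n * (ε' * l2 h) :=
        mul_le_mul_of_nonneg_left hb hrn.le
      have h2 : r n * (ε' * l2 h) ≤ ε' * M := by
        have := mul_le_mul_of_nonneg_left hlh (mul_pos hrn hε'_pos).le
        calc r n * (ε' * l2 h) = r n * ε' * l2 h := by ring
          _ ≤ r n * ε' * (M / r n) := by nlinarith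
          _ = ε' * M := by field_simp
      have h3 : ε' * M = δ / 2 := by rw [hε'_def]; field_simp
      linarith
  calc ℙ _ ≤ ℙ {ω | M < r n * l2 (βhat n ω - β₀)} := measure_mono hsub
    _ ≤ ENNReal.ofReal εr := (hMp n).le
    _ ≤ ε := hofReal
end
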